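/- arXiv:math/0211260 — 2 statements merged into one kernel-verified Lean document; each statement's English description precedes it below -/
import Mathlib

section
/- For every n ≥ 2, the number of occurrences of the subsequence 2-1 (a 2 occurring before a 1, not necessarily adjacent) in C_n equals 2·4^{n-2} - n·2^{n-2}, and the same formula holds for D_n. -/
/-- The pair `(C_n, D_n)` of sigma-words, with `C_0 = D_0 = []`,
`C_{k+1} = C_k · 1 · D_k`, `D_{k+1} = C_k · 2 · D_k`
(so `C_1 = [1]`, `D_1 = [2]`). -/
def sigmaCD : ℕ → List ℕ × List ℕ
  | 0 => ([], [])
  | k + 1 => ((sigmaCD k).1 ++ 1 :: (sigmaCD k).2, (sigmaCD k).1 ++ 2 :: (sigmaCD k).2)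

/-- The sigma-word `C_n`. -/
def sigmaC (n : ℕ) : List ℕ := (sigmaCD n).1

/-- The sigma-word `D_n`. -/
def sigmaD (n : ℕ) : List ℕ := (sigmaCD n).2

/-- Number of occurrences of `p` as a (not necessarily contiguous) subsequence of `w`,
counted with multiplicity of position sets. -/
def subseqCount (p w : List ℕ) : ℕ := (w.sublistsLen p.length).count p

/-- Number of occurrences of `p` as a factor (contiguous subword) of `w`,
i.e. the number of starting positions at which `p` occurs in `w`. -/
def factorCount (p w : List ℕ) : ℕ :=
  (List.range w.length).countP fun i => decide ((w.drop i).take p.length = p)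

lemma count_map_cons (a : ℕ) (L : List (List ℕ)) (u : List ℕ) :
    (L.map (a :: ·)).count (a :: u) = L.count u := by
  induction L with
  | nil => rfl
  | cons v L ih => simp [List.count_cons, ih]

lemma count_sublistsLen_one (t : List ℕ) (x : ℕ) :
    (t.sublistsLen 1).count [x] = t.count x := by
  induction t with
  | nil => rfl
  | cons a t ih =>
    have hs := List.sublistsLen_succ_cons 0 a t
    rw [show (0:ℕ)+1 = 1 from rfl] at hs
    rw [hs, List.count_append, ih]
    simp only [List.sublistsLen_zero, List.map_cons, List.map_nil]
    by_cases hax : a = x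
    · subst hax; simp [List.count_cons]
    · simp [List.count_cons, hax, Ne.symm hax]

lemma subseqCount_cons (a : ℕ) (t : List ℕ) :
    subseqCount [2, 1] (a :: t) =
      subseqCount [2, 1] t + (if a = 2 then t.count 1 else 0) := by
  show ((a :: t).sublistsLen 2).count [2,1] = (t.sublistsLen 2).count [2,1] + _
  have hs := List.sublistsLen_succ_cons 1 a t
  rw [show (1:ℕ)+1 = 2 from rfl] at hs
  rw [hs, List.count_append]
  congr 1
  by_cases h : a = 2
  · subst h
    simp only [if_pos rfl]
    have h := count_map_cons 2 (List.sublistsLen 1 t) [1]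
    rw [show ((2:ℕ) :: [1]) = [2,1] from rfl] at h
    rw [h, count_sublistsLen_one]
    simp
  · rw [if_neg h, List.count_eq_zero]
    intro hm
    rw [List.mem_map] at hm
    obtain ⟨u, _, hu⟩ := hm
    exact h (by injection hu)

lemma subseqCount_append (u v : List ℕ) :
    subseqCount [2, 1] (u ++ v) =
      subseqCount [2, 1] u + subseqCount [2, 1] v + u.count 2 * v.count 1 := by
  induction u with
  | nil => simp [subseqCount]
  | cons a t ih =>
    rw [List.cons_append, subseqCount_cons, ih, subseqCount_cons, List.count_cons]
    by_cases h : a = 2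
    · subst h; simp [List.count_append]; ring
    · simp [h]

lemma counts (n : ℕ) (hn : 1 ≤ n) :
    (sigmaC n).count 1 = 2 ^ (n - 1) ∧ (sigmaC n).count 2 = 2 ^ (n - 1) - 1 ∧
    (sigmaD n).count 1 = 2 ^ (n - 1) - 1 ∧ (sigmaD n).count 2 = 2 ^ (n - 1) := by
  induction n with
  | zero => omega
  | succ k ih =>
    rcases Nat.eq_or_lt_of_le hn with h | h
    · have : k = 0 := by omega
      subst this; decide
    · have hk : 1 ≤ k := by omega
      obtain ⟨h1, h2, h3, h4⟩ := ih hk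
      have hC : sigmaC (k+1) = sigmaC k ++ 1 :: sigmaD k := rfl
      have hD : sigmaD (k+1) = sigmaC k ++ 2 :: sigmaD k := rfl
      have hp : 1 ≤ 2 ^ (k - 1) := Nat.one_le_two_pow
      have hkk : k + 1 - 1 = (k - 1) + 1 := by omega
      rw [hC, hD]
      simp only [List.count_append, List.count_cons, h1, h2, h3, h4, hkk, pow_succ]
      norm_num
      omega

lemma key (n : ℕ) (hn : 2 ≤ n) :
    subseqCount [2, 1] (sigmaC n) + n * 2 ^ (n - 2) = 2 * 4 ^ (n - 2) ∧
    subseqCount [2, 1] (sigmaD n) + n * 2 ^ (n - 2) = 2 * 4 ^ (n - 2) := by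
  induction n with
  | zero => omega
  | succ k ih =>
    rcases Nat.eq_or_lt_of_le hn with h | h
    · have : k = 1 := by omega
      subst this
      constructor <;> decide
    · have hk : 2 ≤ k := by omega
      obtain ⟨h1, h2⟩ := ih hk
      obtain ⟨c1, c2, d1, d2⟩ := counts k (by omega)
      have hC : sigmaC (k+1) = sigmaC k ++ 1 :: sigmaD k := rfl
      have hD : sigmaD (k+1) = sigmaC k ++ 2 :: sigmaD k := rfl
      have e1 : subseqCount [2,1] (1 :: sigmaD k) = subseqCount [2,1] (sigmaD k) := by
        rw [subseqCount_cons]; simp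
      have e2 : subseqCount [2,1] (2 :: sigmaD k) =
          subseqCount [2,1] (sigmaD k) + (sigmaD k).count 1 := by
        rw [subseqCount_cons]; simp
      rw [hC, hD, subseqCount_append, subseqCount_append, e1, e2]
      rw [c2, d1]
      have hc1 : (1 :: sigmaD k).count 1 = 2 ^ (k-1) - 1 + 1 := by
        rw [List.count_cons, d1]; simp
      have hc2 : (2 :: sigmaD k).count 1 = 2 ^ (k-1) - 1 := by
        rw [List.count_cons, d1]; simp
      rw [hc1, hc2]
      have hp : 1 ≤ 2 ^ (k - 1) := Nat.one_le_two_pow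
      have hk1 : k - 1 = (k - 2) + 1 := by omega
      have hk2 : k + 1 - 2 = (k - 2) + 1 := by omega
      have h4 : ∀ m : ℕ, (4:ℕ) ^ m = 2 ^ m * 2 ^ m := fun m => by
        rw [show (4:ℕ) = 2*2 from rfl, mul_pow]
      rw [hk1, hk2] at *
      rw [h4] at h1 h2 ⊢
      set a := subseqCount [2,1] (sigmaC k) with ha
      set b := subseqCount [2,1] (sigmaD k) with hb
      set p := (2:ℕ) ^ (k - 2) with hpdef
      have hps : (2:ℕ) ^ ((k-2)+1) = 2 * p := by rw [pow_succ]; ring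
      rw [hps]
      obtain ⟨q, hq⟩ : ∃ q, 2 * p = q + 1 :=
        ⟨2 * p - 1, by have : 1 ≤ p := Nat.one_le_two_pow; omega⟩
      rw [hq]
      simp only [Nat.add_sub_cancel]
      constructor
      · zify at h1 h2 hq ⊢
        linear_combination h1 + h2 + (q + 1 + 2*p - k) * hq
      · zify at h1 h2 hq ⊢
        linear_combination h1 + h2 + (q + 1 + 2*p - k) * hq

theorem subseq_21 (n : ℕ) (hn : 2 ≤ n) :
    subseqCount [2, 1] (sigmaC n) = 2 * 4 ^ (n - 2) - n * 2 ^ (n - 2) ∧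
    subseqCount [2, 1] (sigmaD n) = 2 * 4 ^ (n - 2) - n * 2 ^ (n - 2) := by
  obtain ⟨h1, h2⟩ := key n hn
  omega
end

section
/- For every n ≥ 2, the number of descents in C_n (indices i with w(i) > w(i+1)) equals 2^{n-2} - 1, and the same holds for D_n. In particular, for n ≥ 2, C_n has exactly one more rise than it has descents. -/
/-- The number of rises of `w`: indices `i` with `w(i) < w(i+1)`. -/
def riseCount (w : List ℕ) : ℕ :=
  (List.range (w.length - 1)).countP fun i => decide (w.getD i 0 < w.getD (i + 1) 0)

/-- The number of descents of `w`: indices `i` with `w(i) > w(i+1)`. -/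
def descentCount (w : List ℕ) : ℕ :=
  (List.range (w.length - 1)).countP fun i => decide (w.getD (i + 1) 0 < w.getD i 0)

/-! ### Auxiliary machinery: adjacent pairs -/

/-- The list of adjacent pairs of a list. -/
def chain : List ℕ → List (ℕ × ℕ)
  | [] => []
  | [_] => []
  | a :: b :: t => (a, b) :: chain (b :: t)

lemma chain_cons (a : ℕ) (l : List ℕ) (h : l ≠ []) :
    chain (a :: l) = (a, l.headD 0) :: chain l := by
  cases l with
  | nil => simp at h
  | cons b t => rfl

lemma chain_length (l : List ℕ) : (chain l).length = l.length - 1 := by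
  induction l with
  | nil => rfl
  | cons a t ih =>
    cases t with
    | nil => rfl
    | cons b s => simp [chain] at ih ⊢; omega

lemma chain_getD (l : List ℕ) : ∀ i, i < l.length - 1 →
    (chain l).getD i (0, 0) = (l.getD i 0, l.getD (i + 1) 0) := by
  induction l with
  | nil => intro i hi; simp at hi
  | cons a t ih =>
    intro i hi
    cases t with
    | nil => simp at hi
    | cons b s =>
      cases i with
      | zero => rfl
      | succ j =>
        have hj : j < (b :: s).length - 1 := by
          simp at hi ⊢; omega
        simpa [chain] using ih j hj

lemma countP_range {α : Type*} (l : List α) (p : α → Bool) (d : α) :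
    (List.range l.length).countP (fun i => p (l.getD i d)) = l.countP p := by
  induction l with
  | nil => simp
  | cons a t ih =>
    rw [List.length_cons, List.range_succ_eq_map, List.countP_cons, List.countP_map,
      List.countP_cons]
    have hc : (fun i => p ((a :: t).getD i d)) ∘ Nat.succ = fun i => p (t.getD i d) := by
      funext i; simp
    rw [hc, ih]
    simp

/-- Descent predicate on a pair. -/
def pd : ℕ × ℕ → Bool := fun p => decide (p.2 < p.1)
/-- Rise predicate on a pair. -/
def pr : ℕ × ℕ → Bool := fun p => decide (p.1 < p.2)

lemma descentCount_eq (w : List ℕ) : descentCount w = (chain w).countP pd := by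
  unfold descentCount
  rw [← countP_range (chain w) pd ((0 : ℕ), (0 : ℕ)), chain_length]
  apply List.countP_congr
  intro i hi
  rw [List.mem_range] at hi
  rw [chain_getD w i hi]
  rfl

lemma riseCount_eq (w : List ℕ) : riseCount w = (chain w).countP pr := by
  unfold riseCount
  rw [← countP_range (chain w) pr ((0 : ℕ), (0 : ℕ)), chain_length]
  apply List.countP_congr
  intro i hi
  rw [List.mem_range] at hi
  rw [chain_getD w i hi]
  rfl

lemma chain_append (u : List ℕ) (b : ℕ) (v : List ℕ) :
    chain (u ++ b :: v) = chain (u ++ [b]) ++ chain (b :: v) := by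
  induction u with
  | nil => simp [chain]
  | cons a u ih =>
    have h1 : u ++ b :: v ≠ [] := by simp
    have h2 : u ++ [b] ≠ [] := by simp
    rw [List.cons_append, chain_cons a _ h1, List.cons_append, chain_cons a _ h2, ih]
    have : (u ++ b :: v).headD 0 = (u ++ [b]).headD 0 := by
      cases u <;> simp
    rw [this, List.cons_append]

lemma chain_concat (u : List ℕ) (b : ℕ) (h : u ≠ []) :
    chain (u ++ [b]) = chain u ++ [(u.getLastD 0, b)] := by
  induction u with
  | nil => simp at h
  | cons a t ih =>
    cases t with
    | nil => rfl
    | cons c s =>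
      have ht : (c :: s : List ℕ) ≠ [] := by simp
      have ht' : (c :: s) ++ [b] ≠ [] := by simp
      rw [List.cons_append, chain_cons a _ ht', ih ht, chain_cons a _ ht]
      simp [List.getLastD_cons]

lemma getLastD_irrel (v : List ℕ) (h : v ≠ []) (d e : ℕ) : v.getLastD d = v.getLastD e := by
  cases v with
  | nil => simp at h
  | cons b t => rw [List.getLastD_cons, List.getLastD_cons]

lemma getLastD_append (u v : List ℕ) (h : v ≠ []) : ∀ d, (u ++ v).getLastD d = v.getLastD 0 := by
  induction u with
  | nil => intro d; exact getLastD_irrel v h d 0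
  | cons a u ih => intro d; rw [List.cons_append, List.getLastD_cons]; exact ih a

lemma headD_append (u v : List ℕ) (h : u ≠ []) : (u ++ v).headD 0 = u.headD 0 := by
  cases u with
  | nil => simp at h
  | cons a t => simp

lemma sigmaC_succ (k : ℕ) : sigmaC (k + 1) = sigmaC k ++ 1 :: sigmaD k := rfl
lemma sigmaD_succ (k : ℕ) : sigmaD (k + 1) = sigmaC k ++ 2 :: sigmaD k := rfl

lemma main_lemma : ∀ m : ℕ,
    sigmaC (m + 2) ≠ [] ∧ sigmaD (m + 2) ≠ [] ∧
    (sigmaC (m + 2)).headD 0 = 1 ∧ (sigmaD (m + 2)).headD 0 = 1 ∧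
    (sigmaC (m + 2)).getLastD 0 = 2 ∧ (sigmaD (m + 2)).getLastD 0 = 2 ∧
    (chain (sigmaC (m + 2))).countP pd = 2 ^ m - 1 ∧
    (chain (sigmaD (m + 2))).countP pd = 2 ^ m - 1 ∧
    (chain (sigmaC (m + 2))).countP pr = 2 ^ m ∧
    (chain (sigmaD (m + 2))).countP pr = 2 ^ m := by
  intro m
  induction m with
  | zero => decide
  | succ k ih =>
    obtain ⟨hC, hD, hhC, hhD, hlC, hlD, hdC, hdD, hrC, hrD⟩ := ih
    set C := sigmaC (k + 2) with hCdef
    set D := sigmaD (k + 2) with hDdef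
    have hpow : 1 ≤ 2 ^ k := Nat.one_le_two_pow
    have hchC : chain (sigmaC (k + 3)) =
        chain C ++ [(2, 1)] ++ (1, 1) :: chain D := by
      rw [show sigmaC (k + 3) = C ++ 1 :: D from rfl, chain_append,
        chain_concat C 1 hC, hlC, chain_cons 1 D hD, hhD]
    have hchD : chain (sigmaD (k + 3)) =
        chain C ++ [(2, 2)] ++ (2, 1) :: chain D := by
      rw [show sigmaD (k + 3) = C ++ 2 :: D from rfl, chain_append,
        chain_concat C 2 hC, hlC, chain_cons 2 D hD, hhD]
    refine ⟨by simp [sigmaC_succ], by simp [sigmaD_succ], ?_, ?_, ?_, ?_, ?_, ?_, ?_, ?_⟩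
    · rw [sigmaC_succ, headD_append _ _ hC]; exact hhC
    · rw [sigmaD_succ, headD_append _ _ hC]; exact hhC
    · rw [sigmaC_succ, show C ++ 1 :: D = (C ++ [1]) ++ D by simp,
        getLastD_append _ _ hD]; exact hlD
    · rw [sigmaD_succ, show C ++ 2 :: D = (C ++ [2]) ++ D by simp,
        getLastD_append _ _ hD]; exact hlD
    · rw [hchC]
      simp only [List.countP_append, List.countP_cons, hdC, hdD]
      norm_num [pd]
      omega
    · rw [hchD]
      simp only [List.countP_append, List.countP_cons, hdC, hdD]
      norm_num [pd]
      omega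
    · rw [hchC]
      simp only [List.countP_append, List.countP_cons, hrC, hrD]
      norm_num [pr]
      ring
    · rw [hchD]
      simp only [List.countP_append, List.countP_cons, hrC, hrD]
      norm_num [pr]
      ring

theorem descents_sigma (n : ℕ) (hn : 2 ≤ n) :
    descentCount (sigmaC n) = 2 ^ (n - 2) - 1 ∧
    descentCount (sigmaD n) = 2 ^ (n - 2) - 1 ∧
    riseCount (sigmaC n) = descentCount (sigmaC n) + 1 := by
  obtain ⟨m, rfl⟩ : ∃ m, n = m + 2 := ⟨n - 2, by omega⟩
  obtain ⟨-, -, -, -, -, -, hdC, hdD, hrC, -⟩ := main_lemma m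
  have h2 : m + 2 - 2 = m := by omega
  have hpow : 1 ≤ 2 ^ m := Nat.one_le_two_pow
  rw [h2, descentCount_eq, descentCount_eq, riseCount_eq, hdC, hdD, hrC]
  refine ⟨rfl, rfl, by omega⟩
end
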